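/- Let f be a pdf supported on [−1/4,1/4]. Then 2·(Re f̂(1))² − 1 ≤ Re f̂(2) ≤ 2·Re f̂(1) − 1. -/

import Mathlib

open MeasureTheory

/-- The normalized Haar (probability) measure on the unit circle `ℝ/ℤ`. -/
noncomputable def haarT : Measure UnitAddCircle := AddCircle.haarAddCircle

/-- The image of `[−1/4, 1/4]` in `𝕋 = ℝ/ℤ`. -/
def QuarterArc : Set UnitAddCircle :=
  (fun x : ℝ => (x : UnitAddCircle)) '' Set.Icc (-(1/4) : ℝ) (1/4)

/-- `f` is a pdf supported on `[−1/4,1/4]`: a nonnegative function in `L²(𝕋)` with integral 1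
which vanishes a.e. outside the image of `[−1/4,1/4]` in `𝕋`. -/
structure IsPdfQuarter (f : UnitAddCircle → ℝ) : Prop where
  memL2 : MemLp f 2 haarT
  nonneg : ∀ x, 0 ≤ f x
  integral_one : ∫ x, f x ∂haarT = 1
  support : ∀ᵐ x ∂haarT, x ∉ QuarterArc → f x = 0

/-- Convolution on `𝕋` with respect to the Haar probability measure. -/
noncomputable def convT (f g : UnitAddCircle → ℝ) (c : UnitAddCircle) : ℝ :=
  ∫ x, f x * g (c - x) ∂haarT

/- Auxiliary material -/

open Real in

/-- The real part of the character `fourier (-1)`, i.e. `x ↦ cos (2πx)`. -/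
noncomputable def cB (x : UnitAddCircle) : ℝ := (fourier (-1 : ℤ) x).re

instance haarT_prob : IsProbabilityMeasure haarT := by
  unfold haarT; infer_instance

lemma cB_continuous : Continuous cB :=
  Complex.continuous_re.comp (fourier (-1 : ℤ)).continuous

lemma abs_fourier (n : ℤ) (x : UnitAddCircle) : ‖fourier n x‖ = 1 := by
  rw [fourier_apply]; exact Circle.norm_coe _

lemma abs_cB_le_one (x : UnitAddCircle) : |cB x| ≤ 1 :=
  (Complex.abs_re_le_norm _).trans_eq (abs_fourier _ _)

lemma cB_le_one (x : UnitAddCircle) : cB x ≤ 1 :=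
  (le_abs_self _).trans (abs_cB_le_one x)

lemma re_fourier_neg_two (x : UnitAddCircle) :
    (fourier (-2 : ℤ) x).re = 2 * cB x ^ 2 - 1 := by
  have h2 : (fourier (-2 : ℤ) x) = fourier (-1 : ℤ) x * fourier (-1 : ℤ) x := by
    rw [← fourier_add]; norm_num
  have habs : ‖(fourier (-1 : ℤ) x)‖ = 1 := abs_fourier _ _
  have hsq : (fourier (-1 : ℤ) x).re ^ 2 + (fourier (-1 : ℤ) x).im ^ 2 = 1 := by
    have h := Complex.sq_norm (fourier (-1 : ℤ) x)
    rw [habs, Complex.normSq_apply] at h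
    nlinarith [h]
  rw [h2, Complex.mul_re]
  unfold cB
  nlinarith [hsq]

open Real in
lemma cB_nonneg_of_mem {x : UnitAddCircle} (hx : x ∈ QuarterArc) : 0 ≤ cB x := by
  obtain ⟨y, hy, rfl⟩ := hx
  have h : cB ((y : ℝ) : UnitAddCircle) = Real.cos (-(2 * π * y)) := by
    unfold cB
    rw [fourier_coe_apply]
    have : (2 * (π : ℂ) * Complex.I * (-1 : ℤ) * (y : ℝ) / (1 : ℝ))
        = ((-(2 * π * y) : ℝ) : ℂ) * Complex.I := by
      push_cast; ring
    rw [this, Complex.exp_ofReal_mul_I_re]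
  rw [h]
  apply Real.cos_nonneg_of_mem_Icc
  have hπ : (0:ℝ) < 2 * π := by positivity
  have hu := mul_le_mul_of_nonneg_left hy.2 hπ.le
  have hl := mul_le_mul_of_nonneg_left hy.1 hπ.le
  constructor
  · nlinarith
  · nlinarith

lemma integrable_f {f : UnitAddCircle → ℝ} (hf : IsPdfQuarter f) : Integrable f haarT :=
  hf.memL2.integrable one_le_two

lemma integrable_f_cB {f : UnitAddCircle → ℝ} (hf : IsPdfQuarter f) :
    Integrable (fun x => cB x * f x) haarT :=
  (integrable_f hf).bdd_mul cB_continuous.aestronglyMeasurable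
    (c := 1) (Filter.Eventually.of_forall fun x => by simpa using abs_cB_le_one x)

lemma integrable_f_cB_sq {f : UnitAddCircle → ℝ} (hf : IsPdfQuarter f) :
    Integrable (fun x => cB x ^ 2 * f x) haarT :=
  (integrable_f hf).bdd_mul (cB_continuous.pow 2).aestronglyMeasurable
    (c := 1) (Filter.Eventually.of_forall fun x => by
      have := abs_cB_le_one x
      rw [Real.norm_eq_abs, abs_pow]
      nlinarith [abs_nonneg (cB x)])

lemma re_coeff {f : UnitAddCircle → ℝ} (hf : IsPdfQuarter f) (n : ℤ) :
    (fourierCoeff (fun x => (f x : ℂ)) n).re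
      = ∫ x, (fourier (-n) x).re * f x ∂haarT := by
  have hint : Integrable (fun x => fourier (-n) x * (f x : ℂ)) haarT :=
    ((integrable_f hf).ofReal).bdd_mul (fourier (-n)).continuous.aestronglyMeasurable
      (c := 1) (Filter.Eventually.of_forall fun x => le_of_eq (abs_fourier _ _))
  have h0 : fourierCoeff (fun x => (f x : ℂ)) n
      = ∫ x, fourier (-n) x * (f x : ℂ) ∂haarT := rfl
  have h := integral_re (𝕜 := ℂ) hint
  simp only [RCLike.re_to_complex] at h
  rw [h0, ← h]
  congr 1
  ext x
  simp [Complex.mul_re]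

theorem fourierCoeff_one_two_domain (f : UnitAddCircle → ℝ) (hf : IsPdfQuarter f) :
    2 * (fourierCoeff (fun x => (f x : ℂ)) 1).re ^ 2 - 1 ≤
      (fourierCoeff (fun x => (f x : ℂ)) 2).re ∧
    (fourierCoeff (fun x => (f x : ℂ)) 2).re ≤
      2 * (fourierCoeff (fun x => (f x : ℂ)) 1).re - 1 := by
  have hInt := integrable_f hf
  have hIntc := integrable_f_cB hf
  have hIntc2 := integrable_f_cB_sq hf
  set a : ℝ := ∫ x, cB x * f x ∂haarT with ha
  set b : ℝ := ∫ x, cB x ^ 2 * f x ∂haarT with hb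
  have h1 : (fourierCoeff (fun x => (f x : ℂ)) 1).re = a := by
    rw [re_coeff hf 1]; rfl
  have h2 : (fourierCoeff (fun x => (f x : ℂ)) 2).re = 2 * b - 1 := by
    rw [re_coeff hf 2]
    have : ∫ x, (fourier (-2 : ℤ) x).re * f x ∂haarT
        = ∫ x, ((2 : ℝ) * (cB x ^ 2 * f x) - f x) ∂haarT := by
      congr 1; ext x; rw [re_fourier_neg_two]; ring
    rw [this, integral_sub (hIntc2.const_mul 2) hInt, integral_const_mul,
      hf.integral_one, ← hb]
  -- lower bound : b ≥ a ^ 2  (Cauchy-Schwarz via nonnegativity)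
  have hvar : 0 ≤ b - a ^ 2 := by
    have hnn : 0 ≤ ∫ x, f x * (cB x - a) ^ 2 ∂haarT :=
      integral_nonneg fun x => mul_nonneg (hf.nonneg x) (sq_nonneg _)
    have heq : ∫ x, f x * (cB x - a) ^ 2 ∂haarT = b - a ^ 2 := by
      have hrw : (fun x => f x * (cB x - a) ^ 2)
          = fun x => (cB x ^ 2 * f x + a ^ 2 * f x) - (2 * a) * (cB x * f x) := by
        ext x; ring
      have hadd : Integrable (fun x => cB x ^ 2 * f x + a ^ 2 * f x) haarT :=
        hIntc2.add (hInt.const_mul _)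
      rw [hrw, integral_sub hadd (hIntc.const_mul _),
        integral_add hIntc2 (hInt.const_mul _), integral_const_mul,
        integral_const_mul, hf.integral_one, ← ha, ← hb]
      ring
    linarith [heq ▸ hnn]
  -- upper bound : b ≤ a
  have hba : b ≤ a := by
    apply integral_mono_ae hIntc2 hIntc
    filter_upwards [hf.support] with x hx
    by_cases hmem : x ∈ QuarterArc
    · have h0 := cB_nonneg_of_mem hmem
      have h1' := cB_le_one x
      have hfx := hf.nonneg x
      nlinarith [mul_nonneg (mul_nonneg hfx h0) (by linarith : (0:ℝ) ≤ 1 - cB x)]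
    · rw [hx hmem]; simp
  refine ⟨?_, ?_⟩
  · rw [h1, h2]; nlinarith
  · rw [h1, h2]; linarith
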